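/- Theorem 1 (necessary optimality condition): suppose Q* is a row-stochastic quantizer minimizing J over all row-stochastic matrices Q : Fin M → Fin K → ℝ. Assume that at Q* each vector p_{XT}(·,h) has positive coordinate sum, F is differentiable at each p_{XT}(·,h) with partial derivatives c_h^n, and each g_k is differentiable at p_Z(k) with d_k = g_k'(p_Z(k)). Define D(m,k) = β · ∑_h ∑_n c_h^n · (p n m) · A k h + d_k · p_{Y_m}. Then for every m ∈ Fin M and every q, s ∈ Fin K: if Q* m q > 0, then D(m,q) ≤ D(m,s). -/

import Mathlib

def simplex (N : ℕ) : Set (Fin N → ℝ) := {q | (∀ n, 0 ≤ q n) ∧ ∑ n, q n = 1}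

/-- `f` is concave on the standard probability simplex. -/
def ConcaveOnSimplex {N : ℕ} (f : (Fin N → ℝ) → ℝ) : Prop :=
  ∀ a ∈ simplex N, ∀ b ∈ simplex N, ∀ lam : ℝ, lam ∈ Set.Icc (0:ℝ) 1 →
    lam * f a + (1 - lam) * f b ≤ f (lam • a + (1 - lam) • b)

/-- The impurity functional `F(v) = (∑ n, v n) * f (v / ∑ n, v n)`. -/
noncomputable def impurity {N : ℕ} (f : (Fin N → ℝ) → ℝ) (v : Fin N → ℝ) : ℝ :=
  (∑ n, v n) * f (fun n => v n / ∑ m, v m)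

/-- A joint distribution on `Fin N × Fin M`. -/
def IsJointDist {N M : ℕ} (p : Fin N → Fin M → ℝ) : Prop :=
  (∀ n m, 0 ≤ p n m) ∧ ∑ n, ∑ m, p n m = 1

/-- A row-stochastic matrix. -/
def RowStochastic {M K : ℕ} (Q : Fin M → Fin K → ℝ) : Prop :=
  (∀ m k, 0 ≤ Q m k) ∧ ∀ m, ∑ k, Q m k = 1

/-- Marginal of the data `Y`: `p_{Y_m} = ∑ n, p n m`. -/
noncomputable def pY {N M : ℕ} (p : Fin N → Fin M → ℝ) (m : Fin M) : ℝ := ∑ n, p n m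

/-- Joint distribution of the source and the quantizer output. -/
noncomputable def pXZ {N M K : ℕ} (p : Fin N → Fin M → ℝ) (Q : Fin M → Fin K → ℝ)
    (n : Fin N) (k : Fin K) : ℝ := ∑ m, p n m * Q m k

/-- Marginal of the quantizer output. -/
noncomputable def pZ {N M K : ℕ} (p : Fin N → Fin M → ℝ) (Q : Fin M → Fin K → ℝ)
    (k : Fin K) : ℝ := ∑ n, pXZ p Q n k

/-- Joint distribution of the source and the channel output. -/
noncomputable def pXT {N M K H : ℕ} (p : Fin N → Fin M → ℝ) (Q : Fin M → Fin K → ℝ)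
    (A : Fin K → Fin H → ℝ) (n : Fin N) (h : Fin H) : ℝ := ∑ k, pXZ p Q n k * A k h

/-- The objective `J(Q) = β ∑_h F(p_{XT}(·,h)) + ∑_k g_k(p_Z(k))`. -/
noncomputable def J {N M K H : ℕ} (β : ℝ) (f : (Fin N → ℝ) → ℝ) (g : Fin K → ℝ → ℝ)
    (p : Fin N → Fin M → ℝ) (A : Fin K → Fin H → ℝ) (Q : Fin M → Fin K → ℝ) : ℝ :=
  β * ∑ h, impurity f (fun n => pXT p Q A n h) + ∑ k, g k (pZ p Q k)

/-- A deterministic (hard) quantizer. -/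
def Deterministic {M K : ℕ} (Q : Fin M → Fin K → ℝ) : Prop :=
  ∀ m, ∃ k, Q m k = 1 ∧ ∀ k', k' ≠ k → Q m k' = 0

lemma aux_deriv_nonneg {φ : ℝ → ℝ} {φ' δ : ℝ} (hδ : 0 < δ)
    (hd : HasDerivAt φ φ' 0) (hm : ∀ t ∈ Set.Icc (0:ℝ) δ, φ 0 ≤ φ t) : 0 ≤ φ' := by
  have h1 : HasDerivWithinAt φ φ' (Set.Ioi 0) 0 := hd.hasDerivWithinAt
  have h2 := hasDerivWithinAt_iff_tendsto_slope.mp h1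
  have hs : Set.Ioi (0:ℝ) \ {0} = Set.Ioi 0 :=
    Set.diff_singleton_eq_self (by simp)
  rw [hs] at h2
  refine ge_of_tendsto h2 ?_
  filter_upwards [Ioo_mem_nhdsGT_of_mem (Set.mem_Ico.mpr ⟨le_refl 0, hδ⟩)] with t ht
  have h3 : φ 0 ≤ φ t := hm t ⟨le_of_lt ht.1, le_of_lt ht.2⟩
  have h4 : 0 ≤ (φ t - φ 0) / (t - 0) := div_nonneg (by linarith) (by linarith [ht.1])
  simpa [slope_def_field, slope, div_eq_inv_mul] using h4

lemma aux_clm_apply {N : ℕ} (L : (Fin N → ℝ) →L[ℝ] ℝ) (w : Fin N → ℝ) :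
    L w = ∑ n, w n * L (Pi.single n 1) := by
  have hw : w = ∑ n, w n • (Pi.single n (1:ℝ) : Fin N → ℝ) := by
    funext j
    simp [Finset.sum_apply, Pi.single_apply]
  conv_lhs => rw [hw]
  rw [map_sum]
  simp [smul_eq_mul]

lemma aux_line_deriv {N : ℕ} (v w : Fin N → ℝ) :
    HasDerivAt (fun t : ℝ => fun n => v n + t * w n) w 0 := by
  have h1 : HasDerivAt (fun t : ℝ => v + t • w) w 0 := by
    simpa using ((hasDerivAt_id (0:ℝ)).smul_const w).const_add v
  exact h1

/-- Theorem 1: necessary optimality condition for the optimal quantizer. -/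
theorem stmt_6 {N M K H : ℕ}
    (β : ℝ) (hβ : 0 < β)
    (p : Fin N → Fin M → ℝ) (hp : IsJointDist p)
    (A : Fin K → Fin H → ℝ) (hA : RowStochastic A)
    (f : (Fin N → ℝ) → ℝ) (hf : ConcaveOnSimplex f)
    (g : Fin K → ℝ → ℝ) (hg : ∀ k, ConcaveOn ℝ Set.univ (g k))
    (Qstar : Fin M → Fin K → ℝ) (hQstar : RowStochastic Qstar)
    (hmin : ∀ Q : Fin M → Fin K → ℝ, RowStochastic Q → J β f g p A Qstar ≤ J β f g p A Q)
    (hpos : ∀ h, 0 < ∑ n, pXT p Qstar A n h)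
    (Dh : Fin H → ((Fin N → ℝ) →L[ℝ] ℝ))
    (hFd : ∀ h, HasFDerivAt (impurity f) (Dh h) (fun n => pXT p Qstar A n h))
    (c : Fin H → Fin N → ℝ) (hc : ∀ h n, Dh h (Pi.single n 1) = c h n)
    (d : Fin K → ℝ) (hgd : ∀ k, HasDerivAt (g k) (d k) (pZ p Qstar k)) :
    ∀ (m : Fin M) (q s : Fin K), 0 < Qstar m q →
      β * ∑ h, ∑ n, c h n * p n m * A q h + d q * pY p m ≤
      β * ∑ h, ∑ n, c h n * p n m * A s h + d s * pY p m := by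
  intro m q s hq
  by_cases hqs : q = s
  · subst hqs; exact le_rfl
  -- perturbation direction
  set e : Fin K → ℝ := fun k => (if k = s then (1:ℝ) else 0) - (if k = q then 1 else 0)
    with he
  set Qt : ℝ → Fin M → Fin K → ℝ :=
    fun t m' k => Qstar m' k + (if m' = m then t * e k else 0) with hQt
  have hesum : ∑ k, e k = 0 := by
    simp [he, Finset.sum_sub_distrib]
  have heA : ∀ h, ∑ k, e k * A k h = A s h - A q h := by
    intro h
    simp [he, sub_mul, Finset.sum_sub_distrib, ite_mul]
  -- induced distributions
  have hpXZ : ∀ t n k, pXZ p (Qt t) n k = pXZ p Qstar n k + t * (p n m * e k) := by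
    intro t n k
    simp only [pXZ, hQt, mul_add, Finset.sum_add_distrib, mul_ite, mul_zero,
      Finset.sum_ite_eq', Finset.mem_univ, if_true]
    ring
  have hpXT : ∀ t n h,
      pXT p (Qt t) A n h = pXT p Qstar A n h + t * (p n m * (A s h - A q h)) := by
    intro t n h
    rw [show pXT p Qstar A n h + t * (p n m * (A s h - A q h))
        = pXT p Qstar A n h + t * (p n m * ∑ k, e k * A k h) by rw [heA]]
    simp only [pXT, hpXZ, add_mul, Finset.sum_add_distrib, Finset.mul_sum]
    congr 1
    exact Finset.sum_congr rfl fun k _ => by ring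
  have hpZ : ∀ t k, pZ p (Qt t) k = pZ p Qstar k + t * (pY p m * e k) := by
    intro t k
    have h1 : t * (pY p m * e k) = ∑ n, t * (p n m * e k) := by
      rw [pY, Finset.sum_mul, Finset.mul_sum]
    simp only [pZ]
    rw [h1, ← Finset.sum_add_distrib]
    exact Finset.sum_congr rfl fun n _ => by rw [hpXZ]
  -- row stochasticity of the perturbed quantizer
  have hRS : ∀ t ∈ Set.Icc (0:ℝ) (Qstar m q), RowStochastic (Qt t) := by
    intro t ht
    constructor
    · intro mm k
      by_cases hmm : mm = m
      · rw [hmm]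
        by_cases hks : k = s
        · rw [hks]
          simp [hQt, he, Ne.symm hqs]
          nlinarith [hQstar.1 m s, ht.1]
        · by_cases hkq : k = q
          · rw [hkq]
            simp [hQt, he, hqs]
            nlinarith [ht.2]
          · simp [hQt, he, hks, hkq]
            exact hQstar.1 _ k
      · simp [hQt, hmm]
        exact hQstar.1 mm k
    · intro mm
      by_cases hmm : mm = m
      · rw [hmm]
        simp [hQt, Finset.sum_add_distrib, hQstar.2 m, ← Finset.mul_sum, hesum]
      · simp [hQt, hmm, hQstar.2 mm]
  -- the objective along the perturbation
  set φ : ℝ → ℝ := fun t =>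
    β * ∑ h, impurity f (fun n => pXT p Qstar A n h + t * (p n m * (A s h - A q h)))
      + ∑ k, g k (pZ p Qstar k + t * (pY p m * e k)) with hφ
  have hJeq : ∀ t, J β f g p A (Qt t) = φ t := by
    intro t
    simp only [J, hφ, hpXT, hpZ]
  have hQt0 : Qt 0 = Qstar := by
    funext m' k; simp [hQt]
  have hmin' : ∀ t ∈ Set.Icc (0:ℝ) (Qstar m q), φ 0 ≤ φ t := by
    intro t ht
    rw [← hJeq t, ← hJeq 0, hQt0]
    exact hmin (Qt t) (hRS t ht)
  -- derivative of φ at 0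
  have hder1 : ∀ h : Fin H, HasDerivAt
      (fun t : ℝ => impurity f (fun n => pXT p Qstar A n h + t * (p n m * (A s h - A q h))))
      (Dh h (fun n => p n m * (A s h - A q h))) 0 := by
    intro h
    have hline := aux_line_deriv (fun n => pXT p Qstar A n h)
      (fun n => p n m * (A s h - A q h))
    have hF : HasFDerivAt (impurity f) (Dh h)
        ((fun t : ℝ => fun n => pXT p Qstar A n h + t * (p n m * (A s h - A q h))) 0) := by
      have : (fun n => pXT p Qstar A n h + (0:ℝ) * (p n m * (A s h - A q h)))
          = fun n => pXT p Qstar A n h := by funext n; ring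
      rw [show ((fun t : ℝ => fun n => pXT p Qstar A n h + t * (p n m * (A s h - A q h))) 0)
        = fun n => pXT p Qstar A n h + (0:ℝ) * (p n m * (A s h - A q h)) from rfl, this]
      exact hFd h
    exact hF.comp_hasDerivAt 0 hline
  have hder2 : ∀ k : Fin K, HasDerivAt
      (fun t : ℝ => g k (pZ p Qstar k + t * (pY p m * e k)))
      (d k * (pY p m * e k)) 0 := by
    intro k
    have hl : HasDerivAt (fun t : ℝ => pZ p Qstar k + t * (pY p m * e k)) (pY p m * e k) 0 := by
      simpa using ((hasDerivAt_id (0:ℝ)).mul_const (pY p m * e k)).const_add (pZ p Qstar k)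
    have hg' : HasDerivAt (g k) (d k) (pZ p Qstar k + 0 * (pY p m * e k)) := by
      simpa using hgd k
    exact hg'.comp 0 hl
  have hderφ : HasDerivAt φ
      (β * ∑ h, Dh h (fun n => p n m * (A s h - A q h)) + ∑ k, d k * (pY p m * e k)) 0 := by
    have h1 : HasDerivAt
        (fun t : ℝ => ∑ h, impurity f
          (fun n => pXT p Qstar A n h + t * (p n m * (A s h - A q h))))
        (∑ h, Dh h (fun n => p n m * (A s h - A q h))) 0 :=
      HasDerivAt.fun_sum (fun h _ => hder1 h)
    have h2 : HasDerivAt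
        (fun t : ℝ => ∑ k, g k (pZ p Qstar k + t * (pY p m * e k)))
        (∑ k, d k * (pY p m * e k)) 0 :=
      HasDerivAt.fun_sum (fun k _ => hder2 k)
    exact (h1.const_mul β).add h2
  have hnn := aux_deriv_nonneg hq hderφ hmin'
  -- rewrite the derivative explicitly
  have hDh : ∀ h, Dh h (fun n => p n m * (A s h - A q h))
      = ∑ n, p n m * (A s h - A q h) * c h n := by
    intro h
    rw [aux_clm_apply]
    exact Finset.sum_congr rfl fun n _ => by rw [hc]
  have hdsum : ∑ k, d k * (pY p m * e k) = d s * pY p m - d q * pY p m := by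
    simp [he, mul_sub, Finset.sum_sub_distrib, mul_ite, mul_comm]
  rw [hdsum] at hnn
  simp only [hDh] at hnn
  have hexp : ∑ h, ∑ n, p n m * (A s h - A q h) * c h n
      = (∑ h, ∑ n, c h n * p n m * A s h) - (∑ h, ∑ n, c h n * p n m * A q h) := by
    rw [← Finset.sum_sub_distrib]
    refine Finset.sum_congr rfl fun h _ => ?_
    rw [← Finset.sum_sub_distrib]
    exact Finset.sum_congr rfl fun n _ => by ring
  rw [hexp, mul_sub] at hnn
  linarith
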